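/- For all v, r, z : Fin n → ℝ one has |A(P v − P r, z) + s(Q v − Q r, z)| ≤ 3 · √(s(v − r, v − r)) · √(s(z, z)); in particular the operator T̃₁ defined by [T̃₁ r, z] = A(P r, z) + s(Q r, z) is Lipschitz continuous with respect to the norm induced by s. -/
import Mathlib

/-- Cauchy–Schwarz for a symmetric PSD bilinear form. -/
lemma cs_aux {ι : Type*} (B : (ι → ℝ) → (ι → ℝ) → ℝ)
    (hadd : ∀ x y z, B (x + y) z = B x z + B y z)
    (hsmul : ∀ (c : ℝ) x z, B (c • x) z = c * B x z)
    (hsymm : ∀ x z, B x z = B z x)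
    (hpsd : ∀ z, 0 ≤ B z z)
    (x z : ι → ℝ) : |B x z| ≤ Real.sqrt (B x x) * Real.sqrt (B z z) := by
  have key : ∀ t : ℝ, 0 ≤ B z z * (t * t) + (2 * B x z) * t + B x x := by
    intro t
    have h := hpsd (x + t • z)
    have h1 : ∀ w, B (x + t • z) w = B x w + t * B z w := fun w => by rw [hadd, hsmul]
    have e1 : B (x + t • z) (x + t • z)
        = B x x + 2 * t * B x z + t * t * B z z := by
      rw [h1, hsymm x (x + t • z), h1, hsymm z (x + t • z), h1, hsymm z x]; ring
    nlinarith [h, e1]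
  have hd := discrim_le_zero key
  rw [discrim] at hd
  have hsq : (B x z) ^ 2 ≤ B x x * B z z := by nlinarith
  calc |B x z| = Real.sqrt ((B x z) ^ 2) := (Real.sqrt_sq_eq_abs _).symm
    _ ≤ Real.sqrt (B x x * B z z) := Real.sqrt_le_sqrt hsq
    _ = Real.sqrt (B x x) * Real.sqrt (B z z) := Real.sqrt_mul (hpsd x) _

/-- Lipschitz continuity (with respect to the norm induced by `s`) of the operator
`[T̃₁ r, z] = A (P r) z + s (Q r) z`:
`|A (P v - P r) z + s (Q v - Q r) z| ≤ 3 * √(s (v - r) (v - r)) * √(s z z)`. -/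
theorem stmt_4 (n : ℕ) (a b σ : Fin n → ℝ)
    (hab : ∀ i, a i ≤ b i) (hσ : ∀ i, 0 < σ i)
    (P Q : (Fin n → ℝ) → (Fin n → ℝ))
    (hP : ∀ v i, P v i = max (a i) (min (v i) (b i)))
    (hQ : ∀ v, Q v = v - P v)
    (s : (Fin n → ℝ) → (Fin n → ℝ) → ℝ)
    (hs : ∀ w v, s w v = ∑ i, σ i * w i * v i)
    (A : (Fin n → ℝ) → (Fin n → ℝ) → ℝ)
    (hA_add_left : ∀ x y z, A (x + y) z = A x z + A y z)
    (hA_smul_left : ∀ (c : ℝ) x z, A (c • x) z = c * A x z)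
    (hA_symm : ∀ x z, A x z = A z x)
    (hA_psd : ∀ z, 0 ≤ A z z)
    (hA_le_s : ∀ z, A z z ≤ s z z)
    (v r z : Fin n → ℝ) :
    |A (P v - P r) z + s (Q v - Q r) z| ≤
      3 * Real.sqrt (s (v - r) (v - r)) * Real.sqrt (s z z) := by
  -- basic properties of s
  have s_symm : ∀ x y, s x y = s y x := by
    intro x y; rw [hs, hs]; exact Finset.sum_congr rfl fun i _ => by ring
  have s_psd : ∀ x, 0 ≤ s x x := by
    intro x; rw [hs]
    exact Finset.sum_nonneg fun i _ => by nlinarith [(hσ i).le, sq_nonneg (x i)]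
  have s_add : ∀ x y w, s (x + y) w = s x w + s y w := by
    intro x y w; rw [hs, hs, hs, ← Finset.sum_add_distrib]
    exact Finset.sum_congr rfl fun i _ => by simp [Pi.add_apply]; ring
  have s_smul : ∀ (c : ℝ) x w, s (c • x) w = c * s x w := by
    intro c x w; rw [hs, hs, Finset.mul_sum]
    exact Finset.sum_congr rfl fun i _ => by simp [Pi.smul_apply]; ring
  set d := P v - P r with hd
  set e := v - r with he
  -- pointwise contraction of the clamp
  have hcontr : ∀ i, |d i| ≤ |e i| := by
    intro i
    have : |P v i - P r i| ≤ |v i - r i| := by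
      rw [hP, hP]
      calc |max (a i) (min (v i) (b i)) - max (a i) (min (r i) (b i))|
          ≤ |min (v i) (b i) - min (r i) (b i)| := by
            simpa [max_comm (a i)] using abs_max_sub_max_le_abs (min (v i) (b i)) (min (r i) (b i)) (a i)
        _ ≤ |v i - r i| := by
            have h := abs_min_sub_min_le_max (v i) (b i) (r i) (b i)
            simp only [sub_self, abs_zero] at h
            exact h.trans (max_le le_rfl (abs_nonneg _))
    simpa [hd, he, Pi.sub_apply] using this
  have hdd_le : s d d ≤ s e e := by
    rw [hs, hs]
    refine Finset.sum_le_sum fun i _ => ?_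
    have h1 : d i * d i ≤ e i * e i := by
      have := mul_self_le_mul_self (abs_nonneg (d i)) (hcontr i)
      simpa [abs_mul_abs_self] using this
    have := (hσ i).le
    nlinarith
  -- Cauchy–Schwarz for A and s
  have csA := cs_aux A hA_add_left hA_smul_left hA_symm hA_psd
  have csS := cs_aux s s_add s_smul s_symm s_psd
  have sqrt_dd : Real.sqrt (s d d) ≤ Real.sqrt (s e e) := Real.sqrt_le_sqrt hdd_le
  have sqrt_Add : Real.sqrt (A d d) ≤ Real.sqrt (s d d) := Real.sqrt_le_sqrt (hA_le_s d)
  have sqrt_Azz : Real.sqrt (A z z) ≤ Real.sqrt (s z z) := Real.sqrt_le_sqrt (hA_le_s z)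
  have hAdz : |A d z| ≤ Real.sqrt (s e e) * Real.sqrt (s z z) := by
    calc |A d z| ≤ Real.sqrt (A d d) * Real.sqrt (A z z) := csA d z
      _ ≤ Real.sqrt (s e e) * Real.sqrt (s z z) := by
          apply mul_le_mul (sqrt_Add.trans sqrt_dd) sqrt_Azz (Real.sqrt_nonneg _) (Real.sqrt_nonneg _)
  -- Q v - Q r = e - d
  have hQdiff : Q v - Q r = e - d := by
    rw [hQ, hQ, hd, he]; abel
  have s_sub : ∀ x y w, s (x - y) w = s x w - s y w := by
    intro x y w
    have : x - y = x + (-1 : ℝ) • y := by simp [sub_eq_add_neg]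
    rw [this, s_add, s_smul]; ring
  have hQz : |s (Q v - Q r) z| ≤ 2 * (Real.sqrt (s e e) * Real.sqrt (s z z)) := by
    rw [hQdiff, s_sub]
    calc |s e z - s d z| ≤ |s e z| + |s d z| := abs_sub _ _
      _ ≤ Real.sqrt (s e e) * Real.sqrt (s z z) + Real.sqrt (s d d) * Real.sqrt (s z z) := by
          exact add_le_add (csS e z) (csS d z)
      _ ≤ 2 * (Real.sqrt (s e e) * Real.sqrt (s z z)) := by
          nlinarith [mul_le_mul_of_nonneg_right sqrt_dd (Real.sqrt_nonneg (s z z))]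
  calc |A d z + s (Q v - Q r) z| ≤ |A d z| + |s (Q v - Q r) z| := abs_add_le _ _
    _ ≤ Real.sqrt (s e e) * Real.sqrt (s z z) + 2 * (Real.sqrt (s e e) * Real.sqrt (s z z)) :=
        add_le_add hAdz hQz
    _ = 3 * Real.sqrt (s e e) * Real.sqrt (s z z) := by ring
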